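/- arXiv:2204.01843 — 3 statements merged into one kernel-verified Lean document; each statement's English description precedes it below -/
import Mathlib

section
/- If D : J → C is a functor preserving finite products (with J and C cartesian categories) and D̄ : J → E is any functor with π ∘ D̄ = D, where π : E → C is a discrete opfibration preserving finite products, then D̄ also preserves finite products. -/
open CategoryTheory

/-- A lift of a morphism `f : π.obj x ⟶ c` in the base through `π`, with given domain `x`. -/
structure DOLift {E : Type u₁} {C : Type u₂} [Category.{v₁} E] [Category.{v₂} C]
    (π : E ⥤ C) {x : E} {c : C} (f : π.obj x ⟶ c) where
  top : E
  hom : x ⟶ top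
  w_obj : π.obj top = c
  w_map : π.map hom ≫ eqToHom w_obj = f

/-- A functor `π : E ⥤ C` is a discrete opfibration if every morphism of `C` whose domain
is in the image of `π` has a unique lift with any prescribed domain over it. -/
def IsDiscreteOpfibration {E : Type u₁} {C : Type u₂} [Category.{v₁} E] [Category.{v₂} C]
    (π : E ⥤ C) : Prop :=
  ∀ {x : E} {c : C} (f : π.obj x ⟶ c), ∃! _l : DOLift π f, True

open CategoryTheory.Limits


/-- A discrete opfibration is conservative. -/
theorem IsDiscreteOpfibration.reflectsIsomorphisms
    {E : Type u₁} {C : Type u₂} [Category.{v₁} E] [Category.{v₂} C]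
    {π : E ⥤ C} (hπ : IsDiscreteOpfibration π) : π.ReflectsIsomorphisms := by
  constructor
  intro x y u hu
  -- lift the inverse of `π.map u` with domain `y`
  obtain ⟨l, -, hl⟩ := hπ (inv (π.map u))
  obtain ⟨top, hom, wobj, wmap⟩ := l
  -- `u ≫ hom` and `𝟙 x` are both lifts of `𝟙 (π.obj x)` with domain `x`
  obtain ⟨m, -, hm⟩ := hπ (𝟙 (π.obj x))
  have h1 : (⟨top, u ≫ hom, wobj, by simp [wmap]⟩ : DOLift π (𝟙 (π.obj x)))
      = ⟨x, 𝟙 x, rfl, by simp⟩ :=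
    (hm _ trivial).trans (hm _ trivial).symm
  injection h1 with ht hh
  subst ht
  have hh' := eq_of_heq hh
  -- `hom ≫ u` and `𝟙 y` are both lifts of `𝟙 (π.obj y)` with domain `y`
  have hmaphom : π.map hom = inv (π.map u) := by simpa using wmap
  obtain ⟨m', -, hm'⟩ := hπ (𝟙 (π.obj y))
  have h2 : (⟨y, hom ≫ u, rfl, by simp [hmaphom]⟩ : DOLift π (𝟙 (π.obj y)))
      = ⟨y, 𝟙 y, rfl, by simp⟩ :=
    (hm' _ trivial).trans (hm' _ trivial).symm
  injection h2 with ht2 hh2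
  exact ⟨hom, hh', hh2⟩

/-- If `D : J ⥤ C` preserves finite products and `Dbar : J ⥤ E` lifts `D`
through a finite-product-preserving discrete opfibration `π : E ⥤ C`, then `Dbar` also
preserves finite products. -/
theorem lift_of_cartesian_diagram_is_cartesian
    {J : Type w} [Category.{t} J] {E : Type u₁} {C : Type u₂}
    [Category.{v₁} E] [Category.{v₂} C]
    [HasFiniteProducts J] [HasFiniteProducts E] [HasFiniteProducts C]
    (π : E ⥤ C) (hπ : IsDiscreteOpfibration π) [PreservesFiniteProducts π]
    (D : J ⥤ C) [PreservesFiniteProducts D]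
    (Dbar : J ⥤ E) (hDbar : Dbar ⋙ π = D) :
    Nonempty (PreservesFiniteProducts Dbar) := by
  subst hDbar
  have : π.ReflectsIsomorphisms := hπ.reflectsIsomorphisms
  refine ⟨⟨fun I => ?_⟩⟩
  have : ReflectsLimitsOfShape (Discrete (Fin I)) π :=
    reflectsLimitsOfShape_of_reflectsIsomorphisms
  exact preservesLimitsOfShape_of_reflects_of_preserves Dbar π
end

section
/- Given an initial functor R : J → J', a discrete opfibration π : E → C, and a commutative square with top D̄ : J → E, left R, right π, and bottom D' : J' → C (so that π ∘ D̄ = D' ∘ R), there exists a unique functor D̄' : J' → E with D̄' ∘ R = D̄ and π ∘ D̄' = D'. -/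
open CategoryTheory

namespace DOPFAux

universe t₁ t₂ w₁ w₂ v₁ v₂ u₁ u₂

variable {E : Type u₁} {C : Type u₂} [Category.{v₁} E] [Category.{v₂} C]
  {π : E ⥤ C} (hπ : IsDiscreteOpfibration π)

include hπ

theorem lift_subsingleton {x : E} {c : C} {f : π.obj x ⟶ c} (l l' : DOLift π f) : l = l' := by
  obtain ⟨l₀, -, hu⟩ := hπ f
  rw [hu l trivial, hu l' trivial]

/-- The chosen lift. -/
noncomputable def theLift {x : E} {c : C} (f : π.obj x ⟶ c) : DOLift π f :=
  (hπ f).exists.choose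

attribute [local irreducible] IsDiscreteOpfibration

/-- Transport of `x` along `f`. -/
noncomputable def tr {x : E} {c : C} (f : π.obj x ⟶ c) : E := (theLift hπ f).top

noncomputable def trHom {x : E} {c : C} (f : π.obj x ⟶ c) : x ⟶ tr hπ f :=
  (theLift hπ f).hom

theorem tr_obj {x : E} {c : C} (f : π.obj x ⟶ c) : π.obj (tr hπ f) = c :=
  (theLift hπ f).w_obj

theorem tr_w {x : E} {c : C} (f : π.obj x ⟶ c) :
    π.map (trHom hπ f) ≫ eqToHom (tr_obj hπ f) = f :=
  (theLift hπ f).w_map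

theorem tr_unique {x : E} {c : C} (f : π.obj x ⟶ c) (y : E) (h : x ⟶ y)
    (hy : π.obj y = c) (w : π.map h ≫ eqToHom hy = f) : y = tr hπ f :=
  congrArg DOLift.top (lift_subsingleton hπ ⟨y, h, hy, w⟩ (theLift hπ f))

theorem map_inj {x y : E} (h h' : x ⟶ y) (w : π.map h = π.map h') : h = h' := by
  have e : (⟨y, h, rfl, by simp⟩ : DOLift π (π.map h)) =
      ⟨y, h', rfl, by simp [w]⟩ := lift_subsingleton hπ _ _
  rw [DOLift.mk.injEq] at e
  exact eq_of_heq e.2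

section Construction

variable {J : Type w₁} {J' : Type w₂} [Category.{t₁} J] [Category.{t₂} J']
  {R : J ⥤ J'} {Dbar : J ⥤ E} {D' : J' ⥤ C} (hsq : Dbar ⋙ π = R ⋙ D')

include hsq

omit hπ in
theorem hsqObj (j : J) : π.obj (Dbar.obj j) = D'.obj (R.obj j) :=
  Functor.congr_obj hsq j

/-- The base morphism associated to an object of the comma category. -/
def fA {j' : J'} (a : CostructuredArrow R j') : π.obj (Dbar.obj a.left) ⟶ D'.obj j' :=
  eqToHom (hsqObj hsq a.left) ≫ D'.map a.hom

noncomputable def objAux {j' : J'} (a : CostructuredArrow R j') : E :=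
  tr hπ (fA hsq a)

theorem objAux_const [R.Initial] {j' : J'} (a b : CostructuredArrow R j') :
    objAux hπ hsq a = objAux hπ hsq b := by
  apply constant_of_preserves_morphisms (objAux hπ hsq)
  intro a b m
  refine (tr_unique hπ (fA hsq a) (objAux hπ hsq b)
    (Dbar.map m.left ≫ trHom hπ (fA hsq b)) (tr_obj hπ _) ?_).symm
  have hm := Functor.congr_hom hsq m.left
  simp only [Functor.comp_map] at hm
  have hb := tr_w hπ (fA hsq b)
  have hw : R.map m.left ≫ b.hom = a.hom := CostructuredArrow.w m
  dsimp only [objAux]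
  rw [Functor.map_comp, Category.assoc, hb, hm]
  simp only [fA, ← hw, Functor.map_comp, Category.assoc, eqToHom_trans_assoc]
  simp

noncomputable def FObj [R.Initial] (j' : J') : E :=
  objAux hπ hsq (Classical.arbitrary (CostructuredArrow R j'))

theorem FObj_eq [R.Initial] {j' : J'} (a : CostructuredArrow R j') :
    FObj hπ hsq j' = objAux hπ hsq a :=
  objAux_const hπ hsq _ a

theorem FObj_π [R.Initial] (j' : J') : π.obj (FObj hπ hsq j') = D'.obj j' :=
  tr_obj hπ _

theorem tr_F [R.Initial] {j'₁ j'₂ : J'} (g : j'₁ ⟶ j'₂) :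
    tr hπ (eqToHom (FObj_π hπ hsq j'₁) ≫ D'.map g) = FObj hπ hsq j'₂ := by
  set a : CostructuredArrow R j'₁ := Classical.arbitrary (CostructuredArrow R j'₁) with ha
  have h2 : FObj hπ hsq j'₂ = objAux hπ hsq (CostructuredArrow.mk (a.hom ≫ g)) :=
    FObj_eq hπ hsq _
  rw [h2]
  refine (tr_unique hπ (fA hsq (CostructuredArrow.mk (a.hom ≫ g)))
    (tr hπ (eqToHom (FObj_π hπ hsq j'₁) ≫ D'.map g))
    (trHom hπ (fA hsq a) ≫ trHom hπ (eqToHom (FObj_π hπ hsq j'₁) ≫ D'.map g))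
    (tr_obj hπ _) ?_)
  have h3 := tr_w hπ (eqToHom (FObj_π hπ hsq j'₁) ≫ D'.map g)
  have h4 := tr_w hπ (fA hsq a)
  have h5 : π.map (trHom hπ (fA hsq a)) ≫ eqToHom (FObj_π hπ hsq j'₁) = fA hsq a := h4
  erw [Functor.map_comp, Category.assoc, h3, reassoc_of% h5]
  simp [fA]

noncomputable def FMap [R.Initial] {j'₁ j'₂ : J'} (g : j'₁ ⟶ j'₂) :
    FObj hπ hsq j'₁ ⟶ FObj hπ hsq j'₂ :=
  trHom hπ (eqToHom (FObj_π hπ hsq j'₁) ≫ D'.map g) ≫ eqToHom (tr_F hπ hsq g)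

theorem FMap_π [R.Initial] {j'₁ j'₂ : J'} (g : j'₁ ⟶ j'₂) :
    π.map (FMap hπ hsq g) =
      eqToHom (FObj_π hπ hsq j'₁) ≫ D'.map g ≫ eqToHom (FObj_π hπ hsq j'₂).symm := by
  have h := tr_w hπ (eqToHom (FObj_π hπ hsq j'₁) ≫ D'.map g)
  have h2 : eqToHom (congrArg π.obj (tr_F hπ hsq g)) =
      eqToHom (tr_obj hπ (eqToHom (FObj_π hπ hsq j'₁) ≫ D'.map g)) ≫
        eqToHom (FObj_π hπ hsq j'₂).symm := by simp
  rw [FMap, Functor.map_comp, eqToHom_map, h2, ← Category.assoc, h]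
  simp

noncomputable def F [R.Initial] : J' ⥤ E where
  obj := FObj hπ hsq
  map := FMap hπ hsq
  map_id j' := map_inj hπ _ _ (by simp [FMap_π hπ hsq])
  map_comp g g' := map_inj hπ _ _ (by simp [FMap_π hπ hsq])

theorem F_obj_R [R.Initial] (j : J) : (R ⋙ F hπ hsq).obj j = Dbar.obj j := by
  show FObj hπ hsq (R.obj j) = Dbar.obj j
  rw [FObj_eq hπ hsq (CostructuredArrow.mk (𝟙 (R.obj j)))]
  exact (tr_unique hπ _ (Dbar.obj j) (𝟙 _) (hsqObj hsq j) (by simp [fA])).symm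

theorem F_comp_left [R.Initial] : R ⋙ F hπ hsq = Dbar := by
  refine CategoryTheory.Functor.ext (F_obj_R hπ hsq) (fun X Y f => ?_)
  apply map_inj hπ
  have hm := Functor.congr_hom hsq f
  simp only [Functor.comp_map] at hm
  simp only [Functor.map_comp, eqToHom_map]
  simp [F, FMap_π hπ hsq, eqToHom_map, hm]
  erw [eqToHom_trans_assoc, eqToHom_trans]

theorem F_comp_right [R.Initial] : F hπ hsq ⋙ π = D' := by
  refine CategoryTheory.Functor.ext (fun j' => (FObj_π hπ hsq j' : (F hπ hsq ⋙ π).obj j' = D'.obj j')) (fun X Y g => ?_)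
  simpa [F] using FMap_π hπ hsq g

theorem F_unique [R.Initial] (G : J' ⥤ E) (hG1 : R ⋙ G = Dbar) (hG2 : G ⋙ π = D') :
    G = F hπ hsq := by
  have hobj : ∀ j', G.obj j' = (F hπ hsq).obj j' := by
    intro j'
    set a : CostructuredArrow R j' := Classical.arbitrary (CostructuredArrow R j') with ha
    have h1 : G.obj (R.obj a.left) = Dbar.obj a.left := Functor.congr_obj hG1 a.left
    have h2 : π.obj (G.obj j') = D'.obj j' := Functor.congr_obj hG2 j'
    show G.obj j' = objAux hπ hsq a
    refine tr_unique hπ (fA hsq a) (G.obj j') (eqToHom h1.symm ≫ G.map a.hom) h2 ?_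
    have hm := Functor.congr_hom hG2 a.hom
    simp only [Functor.comp_map] at hm
    simp [fA, hm, eqToHom_map]
  refine CategoryTheory.Functor.ext hobj (fun X Y g => ?_)
  apply map_inj hπ
  have hm := Functor.congr_hom hG2 g
  simp only [Functor.comp_map] at hm
  simp only [Functor.map_comp, eqToHom_map]
  simp [F, FMap_π hπ hsq, eqToHom_map, hm]
  erw [eqToHom_trans_assoc, eqToHom_trans]

end Construction

end DOPFAux

/-- Unique diagonal fillers for the comprehensive factorization system:
given an initial functor `R : J ⥤ J'`, a discrete opfibration `π : E ⥤ C`, and a commuting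
square `Dbar ⋙ π = R ⋙ D'`, there is a unique functor `Dbar' : J' ⥤ E` with
`R ⋙ Dbar' = Dbar` and `Dbar' ⋙ π = D'`. -/
theorem initial_dopf_unique_lifting
    {J : Type w₁} {J' : Type w₂} [Category.{t₁} J] [Category.{t₂} J']
    {E : Type u₁} {C : Type u₂} [Category.{v₁} E] [Category.{v₂} C]
    (R : J ⥤ J') (hR : R.Initial)
    (π : E ⥤ C) (hπ : IsDiscreteOpfibration π)
    (Dbar : J ⥤ E) (D' : J' ⥤ C) (hsq : Dbar ⋙ π = R ⋙ D') :
    ∃! Dbar' : J' ⥤ E, R ⋙ Dbar' = Dbar ∧ Dbar' ⋙ π = D' := by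
  haveI := hR
  exact ⟨DOPFAux.F hπ hsq, ⟨DOPFAux.F_comp_left hπ hsq, DOPFAux.F_comp_right hπ hsq⟩,
    fun G hG => DOPFAux.F_unique hπ hsq G hG.1 hG.2⟩
end

section
/- If (R, ρ) : (I, D) → (J, E) and (S, σ) : (J, E) → (K, F) are relatively initial morphisms in Diag→(C), then their composite (R·S, (σ * R) ∘ ρ) : (I, D) → (K, F) is relatively initial. -/
open CategoryTheory

section RelCommaDefs

variable {J : Type w₁} {J' : Type w₂} [Category.{t₁} J] [Category.{t₂} J']
variable {C : Type u₂} [Category.{v₂} C]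

/-- An object of the relative comma category `(R,ρ)/j'` attached to a morphism
`(R, ρ) : (J, D) → (J', D')` of `Diag→(C)` (so `ρ : D ⟶ R ⋙ D'`): a pair of an object
`j : J` and a morphism `f : R j ⟶ j'`. -/
structure RelComma {R : J ⥤ J'} {D : J ⥤ C} {D' : J' ⥤ C}
    (ρ : D ⟶ R ⋙ D') (j' : J') where
  j : J
  f : R.obj j ⟶ j'

/-- Morphisms of `(R,ρ)/j'` are morphisms `h : j ⟶ k` of `J` making the pentagon involving
`ρ`, `D` and `D'` commute. -/
instance RelComma.category {R : J ⥤ J'} {D : J ⥤ C} {D' : J' ⥤ C}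
    (ρ : D ⟶ R ⋙ D') (j' : J') : Category (RelComma ρ j') where
  Hom a b := { h : a.j ⟶ b.j // D.map h ≫ ρ.app b.j ≫ D'.map b.f = ρ.app a.j ≫ D'.map a.f }
  id a := ⟨𝟙 a.j, by simp⟩
  comp f g := ⟨f.1 ≫ g.1, by rw [Functor.map_comp, Category.assoc, g.2, f.2]⟩
  id_comp f := Subtype.ext (Category.id_comp f.1)
  comp_id f := Subtype.ext (Category.comp_id f.1)
  assoc f g h := Subtype.ext (Category.assoc f.1 g.1 h.1)

/-- A morphism `(R, ρ) : (J, D) → (J', D')` of `Diag→(C)` is *relatively initial* if each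
relative comma category `(R,ρ)/j'` is (nonempty and) connected. -/
def RelativelyInitial {R : J ⥤ J'} {D : J ⥤ C} {D' : J' ⥤ C}
    (ρ : D ⟶ R ⋙ D') : Prop :=
  ∀ j' : J', IsConnected (RelComma ρ j')

end RelCommaDefs

section Aux

open CategoryTheory

variable {I : Type w₁} {J : Type w₂} {K : Type w₃}
    [Category.{t₁} I] [Category.{t₂} J] [Category.{t₃} K]
    {C : Type u₂} [Category.{v₂} C]
    {R : I ⥤ J} {S : J ⥤ K}
    {D : I ⥤ C} {E : J ⥤ C} {F : K ⥤ C}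
    (ρ : D ⟶ R ⋙ E) (σ : E ⟶ S ⋙ F)

/-- For an object `x = (j, g)` of `(S,σ)/k`, the functor `(R,ρ)/j ⥤ ((R⋙S), τ)/k`
sending `(i, f)` to `(i, S f ≫ g)`. -/
def relCommaPushFunctor {k : K} (x : RelComma σ k) :
    RelComma ρ x.j ⥤
      RelComma (show D ⟶ (R ⋙ S) ⋙ F from ρ ≫ Functor.whiskerLeft R σ) k where
  obj y := ⟨y.j, S.map y.f ≫ x.f⟩
  map {y₁ y₂} h := ⟨h.1, by
    have h2 := h.2
    have n₁ := σ.naturality y₁.f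
    have n₂ := σ.naturality y₂.f
    simp only [Functor.comp_map] at n₁ n₂
    simp only [NatTrans.comp_app, Functor.whiskerLeft_app, Functor.map_comp, Category.assoc]
    rw [reassoc_of% n₂.symm, reassoc_of% n₁.symm, reassoc_of% h2]⟩
  map_id y := Subtype.ext rfl
  map_comp f g := Subtype.ext rfl

end Aux
/-- The composite of two relatively initial morphisms of `Diag→(C)` is
relatively initial: if `(R, ρ) : (I, D) → (J, E)` and `(S, σ) : (J, E) → (K, F)` are
relatively initial, so is `(R ⋙ S, ρ ≫ whiskerLeft R σ)`. -/
theorem relativelyInitial_comp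
    {I : Type w₁} {J : Type w₂} {K : Type w₃}
    [Category.{t₁} I] [Category.{t₂} J] [Category.{t₃} K]
    {C : Type u₂} [Category.{v₂} C]
    {R : I ⥤ J} {S : J ⥤ K}
    {D : I ⥤ C} {E : J ⥤ C} {F : K ⥤ C}
    (ρ : D ⟶ R ⋙ E) (σ : E ⟶ S ⋙ F)
    (hρ : RelativelyInitial ρ) (hσ : RelativelyInitial σ) :
    RelativelyInitial
      (show D ⟶ (R ⋙ S) ⋙ F from ρ ≫ Functor.whiskerLeft R σ) := by
  intro k
  haveI := hσ k
  set τ : D ⟶ (R ⋙ S) ⋙ F := ρ ≫ Functor.whiskerLeft R σ with hτ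
  have pt : ∀ j : J, RelComma ρ j := fun j =>
    Classical.choice (hρ j).is_nonempty
  let Ψ : RelComma σ k → RelComma τ k := fun x =>
    (relCommaPushFunctor ρ σ x).obj (pt x.j)
  have lemA : ∀ (x : RelComma σ k) (y₁ y₂ : RelComma ρ x.j),
      Zigzag ((relCommaPushFunctor ρ σ x).obj y₁) ((relCommaPushFunctor ρ σ x).obj y₂) := by
    intro x y₁ y₂
    haveI := hρ x.j
    exact zigzag_obj_of_zigzag _ (isPreconnected_zigzag y₁ y₂)
  have lemB : ∀ {x₁ x₂ : RelComma σ k} (u : x₁ ⟶ x₂) (y : RelComma ρ x₁.j),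
      ((relCommaPushFunctor ρ σ x₁).obj y ⟶
        (relCommaPushFunctor ρ σ x₂).obj ⟨y.j, y.f ≫ u.1⟩) := by
    intro x₁ x₂ u y
    refine ⟨𝟙 y.j, ?_⟩
    have n₁ := σ.naturality y.f
    have n₂ := σ.naturality u.1
    simp only [Functor.comp_map] at n₁ n₂
    have hu := u.2
    simp only [relCommaPushFunctor, hτ, NatTrans.comp_app, Functor.whiskerLeft_app,
      Functor.map_comp, Functor.map_id, Category.id_comp, Category.assoc]
    rw [reassoc_of% n₁.symm, reassoc_of% n₂.symm, hu, reassoc_of% n₁]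
    simp
  have step : ∀ {x₁ x₂ : RelComma σ k}, (x₁ ⟶ x₂) → Zigzag (Ψ x₁) (Ψ x₂) := by
    intro x₁ x₂ u
    have e₁ : Zigzag (Ψ x₁) ((relCommaPushFunctor ρ σ x₂).obj ⟨(pt x₁.j).j, (pt x₁.j).f ≫ u.1⟩) :=
      Relation.ReflTransGen.single (Or.inl ⟨lemB u (pt x₁.j)⟩)
    exact e₁.trans (lemA x₂ _ _)
  have main : ∀ x₁ x₂ : RelComma σ k, Zigzag x₁ x₂ → Zigzag (Ψ x₁) (Ψ x₂) := by
    intro x₁ x₂ h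
    induction h with
    | refl => exact Relation.ReflTransGen.refl
    | tail _ hz ih =>
      exact ih.trans (hz.elim (fun ⟨u⟩ => step u)
        (fun ⟨u⟩ => zigzag_symmetric.symm _ _ (step u)))
  have key : ∀ a : RelComma τ k, Zigzag a (Ψ ⟨R.obj a.j, a.f⟩) := by
    intro a
    have ha : (relCommaPushFunctor ρ σ (⟨R.obj a.j, a.f⟩ : RelComma σ k)).obj
        ⟨a.j, 𝟙 (R.obj a.j)⟩ = a := by
      cases a
      simp [relCommaPushFunctor]
    conv_lhs => rw [← ha]
    exact lemA _ _ _
  haveI : Nonempty (RelComma τ k) :=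
    ⟨Ψ (Classical.choice (hσ k).is_nonempty)⟩
  apply zigzag_isConnected
  intro a b
  exact ((key a).trans (main _ _ (isPreconnected_zigzag _ _))).trans
    (zigzag_symmetric.symm _ _ (key b))
end
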